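/- For the scalar Kalman variance recursion p_{t+1} = f(p_t) with f(p) = r(p+q)/(p+q+r), q, r > 0, the convergence to the fixed point p* is geometric: |p_t − p*| ≤ (r²/(q+r)²)^t · |p_0 − p*| for all p_0 ≥ 0 and t ≥ 0. -/

import Mathlib

theorem kalman_variance_geometric_convergence (q r : ℝ) (hq : 0 < q) (hr : 0 < r)
    (p : ℕ → ℝ) (hp0 : 0 ≤ p 0)
    (hrec : ∀ t : ℕ, p (t + 1) = r * (p t + q) / (p t + q + r)) :
    ∀ t : ℕ, |p t - (Real.sqrt (q^2 + 4*q*r) - q) / 2|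
      ≤ (r^2 / (q + r)^2)^t * |p 0 - (Real.sqrt (q^2 + 4*q*r) - q) / 2| := by
  set s := Real.sqrt (q^2 + 4*q*r) with hs_def
  have hs0 : 0 ≤ s := Real.sqrt_nonneg _
  have hs2 : s^2 = q^2 + 4*q*r := Real.sq_sqrt (by nlinarith)
  have hsq : q ≤ s := by nlinarith
  set P := (s - q) / 2 with hP_def
  have hP0 : 0 ≤ P := by rw [hP_def]; linarith
  have hfix : P^2 + q*P - q*r = 0 := by
    rw [hP_def]; nlinarith
  have hpnn : ∀ t, 0 ≤ p t := by
    intro t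
    induction t with
    | zero => exact hp0
    | succ n ih =>
      rw [hrec n]
      exact div_nonneg (by nlinarith) (by nlinarith)
  have key : ∀ a : ℝ, 0 ≤ a →
      |r*(a+q)/(a+q+r) - P| ≤ r^2/(q+r)^2 * |a - P| := by
    intro a ha
    have hD1 : 0 < a + q + r := by linarith
    have hD2 : 0 < P + q + r := by linarith
    have hD : 0 < (a+q+r)*(P+q+r) := mul_pos hD1 hD2
    have hdiff : (r*(a+q)/(a+q+r) - P) * ((a+q+r)*(P+q+r)) = r^2*(a-P) := by
      field_simp
      linear_combination (-(a+q+r)) * hfix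
    have h1 : |r*(a+q)/(a+q+r) - P| = r^2 * |a-P| / ((a+q+r)*(P+q+r)) := by
      rw [eq_div_iff (ne_of_gt hD)]
      calc |r*(a+q)/(a+q+r) - P| * ((a+q+r)*(P+q+r))
          = |r*(a+q)/(a+q+r) - P| * |(a+q+r)*(P+q+r)| := by rw [abs_of_pos hD]
        _ = |(r*(a+q)/(a+q+r) - P) * ((a+q+r)*(P+q+r))| := (abs_mul _ _).symm
        _ = |r^2*(a-P)| := by rw [hdiff]
        _ = r^2 * |a-P| := by rw [abs_mul, abs_of_nonneg (by positivity : (0:ℝ) ≤ r^2)]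
    rw [h1, div_mul_eq_mul_div]
    gcongr
    nlinarith
  intro t
  induction t with
  | zero => simp
  | succ n ih =>
    have h2 : |p (n+1) - P| ≤ r^2/(q+r)^2 * |p n - P| := by
      rw [hrec n]; exact key (p n) (hpnn n)
    calc |p (n+1) - P| ≤ r^2/(q+r)^2 * |p n - P| := h2
      _ ≤ r^2/(q+r)^2 * ((r^2/(q+r)^2)^n * |p 0 - P|) := by
          apply mul_le_mul_of_nonneg_left ih (by positivity)
      _ = (r^2/(q+r)^2)^(n+1) * |p 0 - P| := by ring
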